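/- (One-round descent inequality, strongly convex case.) Under the setting and assumptions of the one-round descent inequality for the online proximal algorithm, assume in addition that L is σ-strongly convex on Θ, i.e., for all θ₀ ∈ Θ, all g ∈ ∂L(θ₀), and all θ ∈ ℝ^d, L(θ) ≥ L(θ₀) + ⟨g, θ − θ₀⟩ + (σ/2)‖θ − θ₀‖². Then for every θ̄ ∈ Θ: L(θ_t) + λR(θ_{t+1}) ≤ L(θ̄) + λR(θ̄) + (η/2)G² + (‖θ̄ − θ_t‖² − ‖θ̄ − θ_{t+1}‖²)/(2η) − (σ/2)‖θ̄ − θ_t‖². -/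

import Mathlib

open RealInnerProductSpace

noncomputable section

/-- Extended-real-valued convexity of `φ : E → ℝ ∪ {+∞}`. -/
def ERealConvexOn {E : Type*} [NormedAddCommGroup E] [InnerProductSpace ℝ E]
    (φ : E → EReal) : Prop :=
  ∀ x y : E, ∀ t : ℝ, 0 ≤ t → t ≤ 1 →
    φ (t • x + (1 - t) • y) ≤ (t : EReal) * φ x + ((1 - t : ℝ) : EReal) * φ y

/-- `φ` is proper: it never takes the value `−∞` (functions into `ℝ ∪ {+∞}`
never do) and is finite somewhere. -/
def ERealProper {E : Type*} (φ : E → EReal) : Prop :=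
  (∃ x, φ x ≠ ⊤) ∧ ∀ x, φ x ≠ ⊥

/-- `x` is the proximity point `prox_φ(y)`, i.e. a minimizer of
`z ↦ (1/2)‖z − y‖² + φ(z)`. -/
def IsProxPt {E : Type*} [NormedAddCommGroup E] (φ : E → EReal) (y x : E) : Prop :=
  ∀ z : E, (((1/2) * ‖x - y‖^2 : ℝ) : EReal) + φ x ≤ (((1/2) * ‖z - y‖^2 : ℝ) : EReal) + φ z

/-- The Moreau envelope `M_φ(y) = inf_x (1/2)‖x − y‖² + φ(x)`. -/
def moreauEnvelope {E : Type*} [NormedAddCommGroup E] (φ : E → EReal) (y : E) : EReal :=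
  ⨅ x : E, (((1/2) * ‖x - y‖^2 : ℝ) : EReal) + φ x

/-- The Fenchel conjugate `φ⋆(y) = sup_x ⟨y, x⟩ − φ(x)`. -/
def fenchelConjugate {E : Type*} [NormedAddCommGroup E] [InnerProductSpace ℝ E]
    (φ : E → EReal) (y : E) : EReal :=
  ⨆ x : E, ((⟪y, x⟫ : ℝ) : EReal) - φ x

/-- `g` is a subgradient of the convex function `L` at `θ₀`. -/
def IsSubgradientAt {E : Type*} [NormedAddCommGroup E] [InnerProductSpace ℝ E]
    (L : E → ℝ) (g θ₀ : E) : Prop :=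
  ∀ θ : E, (⟪g, θ - θ₀⟫ : ℝ) ≤ L θ - L θ₀

/-- `x = prox_{c·φ}(y)`: `x` minimizes `z ↦ (1/2)‖z − y‖² + c·φ(z)`. -/
def IsProxPtOf {E : Type*} [NormedAddCommGroup E] (c : ℝ) (φ : E → EReal) (y x : E) : Prop :=
  ∀ z : E, (((1/2) * ‖x - y‖^2 : ℝ) : EReal) + (c : EReal) * φ x
    ≤ (((1/2) * ‖z - y‖^2 : ℝ) : EReal) + (c : EReal) * φ z

/-- `x = Π_Θ(y)`: `x` is the Euclidean projection of `y` onto `Θ`. -/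
def IsProjPt {E : Type*} [NormedAddCommGroup E] (Θ : Set E) (y x : E) : Prop :=
  x ∈ Θ ∧ ∀ z ∈ Θ, ‖x - y‖ ≤ ‖z - y‖


lemma OPA7_coe_sum {ι : Type*} (s : Finset ι) (f : ι → ℝ) :
    ((∑ i ∈ s, f i : ℝ) : EReal) = ∑ i ∈ s, (f i : EReal) :=
  map_sum (⟨⟨(fun r : ℝ => (r : EReal)), EReal.coe_zero⟩, EReal.coe_add⟩ : ℝ →+ EReal) f s

lemma OPA7_sum_ne_bot {ι : Type*} (s : Finset ι) (f : ι → EReal)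
    (h : ∀ i ∈ s, f i ≠ ⊥) : ∑ i ∈ s, f i ≠ ⊥ := by
  induction s using Finset.cons_induction with
  | empty => simp
  | cons i s hi ih =>
    rw [Finset.sum_cons, Ne, EReal.add_eq_bot_iff]
    push_neg
    exact ⟨h i (Finset.mem_cons_self i s), ih fun j hj => h j (Finset.mem_cons_of_mem hj)⟩

lemma OPA7_sum_eq_top {ι : Type*} [DecidableEq ι] (s : Finset ι) (f : ι → EReal)
    (hb : ∀ i ∈ s, f i ≠ ⊥) {i₀ : ι} (hi₀ : i₀ ∈ s) (ht : f i₀ = ⊤) :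
    ∑ i ∈ s, f i = ⊤ := by
  rw [← Finset.add_sum_erase s f hi₀, ht,
    EReal.top_add_of_ne_bot (OPA7_sum_ne_bot _ _ fun i hi => hb i (Finset.mem_of_mem_erase hi))]

lemma OPA7_cmul_ne_bot {c : ℝ} (hc : 0 ≤ c) {x : EReal} (hx : x ≠ ⊥) :
    (c : EReal) * x ≠ ⊥ := by
  rcases hc.eq_or_lt with h | h
  · rw [← h, EReal.coe_zero, EReal.zero_mul]; exact (by simp : (0:EReal) ≠ ⊥)
  · induction x with
    | bot => exact absurd rfl hx
    | coe r => rw [← EReal.coe_mul]; exact EReal.coe_ne_bot _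
    | top => rw [EReal.coe_mul_top_of_pos h]; exact top_ne_bot

lemma OPA7_cmul_eq_coe {c r : ℝ} (hc : 0 < c) {x : EReal}
    (h : (c : EReal) * x = (r : ℝ)) : ∃ ρ : ℝ, x = (ρ : EReal) ∧ c * ρ = r := by
  induction x with
  | bot => rw [EReal.coe_mul_bot_of_pos hc] at h; exact absurd h.symm (EReal.coe_ne_bot r)
  | coe ρ =>
    rw [← EReal.coe_mul] at h
    exact ⟨ρ, rfl, EReal.coe_eq_coe_iff.mp h⟩
  | top => rw [EReal.coe_mul_top_of_pos hc] at h; exact absurd h.symm (EReal.coe_ne_top r)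

lemma OPA7_key {E : Type*} [NormedAddCommGroup E] [InnerProductSpace ℝ E]
    (x y z : E) (a b : ℝ)
    (h : ∀ t : ℝ, 0 < t → t ≤ 1 →
      (1/2) * ‖x - y‖^2 + a ≤ (1/2) * ‖t • z + (1 - t) • x - y‖^2 + (t * b + (1 - t) * a)) :
    ‖x - z‖^2 + 2*(a - b) ≤ ‖y - z‖^2 := by
  have key2 : ∀ t : ℝ, 0 < t → t ≤ 1 →
      a - b ≤ ⟪x - y, z - x⟫ + t/2 * ‖z - x‖^2 := by
    intro t ht0 ht1
    have h1 := h t ht0 ht1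
    have hexp : t • z + (1 - t) • x - y = (x - y) + t • (z - x) := by
      rw [smul_sub]; module
    rw [hexp, norm_add_sq_real, real_inner_smul_right, norm_smul, Real.norm_eq_abs, abs_of_pos ht0] at h1
    have h2 : t * (a - b) ≤ t * (⟪x - y, z - x⟫ + t/2 * ‖z - x‖^2) := by
      have : (t * ‖z - x‖)^2 = t^2 * ‖z - x‖^2 := by ring
      nlinarith [h1]
    exact (mul_le_mul_iff_right₀ ht0).mp h2
  have hin : a - b ≤ ⟪x - y, z - x⟫ := by
    by_cases hzx : ‖z - x‖ = 0
    · have := key2 1 one_pos le_rfl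
      rw [hzx] at this; linarith
    · by_contra hcon
      push_neg at hcon
      have hnz : 0 < ‖z - x‖^2 := by positivity
      set ε := a - b - ⟪x - y, z - x⟫ with hε
      have hε0 : 0 < ε := by simp only [hε]; linarith
      set t := min 1 (ε / ‖z - x‖^2) with htdef
      have ht0 : 0 < t := lt_min one_pos (div_pos hε0 hnz)
      have h3 := key2 t ht0 (min_le_left _ _)
      have h4 : t * ‖z - x‖^2 ≤ ε := by
        have h5 : t ≤ ε / ‖z - x‖^2 := min_le_right _ _
        calc t * ‖z - x‖^2 ≤ (ε / ‖z - x‖^2) * ‖z - x‖^2 :=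
              mul_le_mul_of_nonneg_right h5 hnz.le
          _ = ε := by field_simp
      linarith
  have hexpand : ‖y - z‖^2 = ‖y - x‖^2 + 2*⟪y - x, x - z⟫ + ‖x - z‖^2 := by
    rw [← norm_add_sq_real]; congr 1; abel
  have hip : ⟪y - x, x - z⟫ = ⟪x - y, z - x⟫ := by
    rw [show x - y = -(y - x) by abel, show z - x = -(x - z) by abel, inner_neg_neg]
  nlinarith [sq_nonneg ‖y - x‖, hin, hexpand, hip]

lemma OPA7_final (η lam G σ Lt Lb X Y u v w : ℝ) (hη : 0 < η)
    (hmono : η*lam*u ≤ η*lam*w)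
    (Star : Y + 2*(η*lam*w - η*lam*v) ≤ X - 2*η*(Lt - Lb) - η*σ*X + η^2*G^2) :
    Lt + lam*u ≤ Lb + lam*v + (η/2*G^2 + (X - Y)/(2*η) - σ/2*X) := by
  have h2η : (0:ℝ) < 2*η := by linarith
  have hdiv : Lt + lam*u - (Lb + lam*v) + σ/2*X - η/2*G^2 ≤ (X - Y)/(2*η) := by
    rw [le_div_iff₀ h2η]
    nlinarith [Star, hmono]
  linarith

/-- one-round descent inequality, strongly convex case. -/
theorem online_prox_one_round_strongly_convex {d J : ℕ} (hJ : 0 < J)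
    (Θ : Set (EuclideanSpace ℝ (Fin d))) (hΘc : IsClosed Θ) (hΘconv : Convex ℝ Θ)
    (lam η G : ℝ) (hlam : 0 ≤ lam) (hη : 0 < η) (hG : 0 ≤ G)
    (L : EuclideanSpace ℝ (Fin d) → ℝ) (hLconv : ConvexOn ℝ Set.univ L)
    (hLlip : ∀ θ₀ ∈ Θ, ∀ g : EuclideanSpace ℝ (Fin d), IsSubgradientAt L g θ₀ → ‖g‖ ≤ G)
    (R : Fin J → EuclideanSpace ℝ (Fin d) → EReal)
    (hRconv : ∀ j, ERealConvexOn (R j)) (hRlsc : ∀ j, LowerSemicontinuous (R j))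
    (hRprop : ∀ j, ERealProper (R j))
    -- condition (ii): each prox operator does not increase the previous `R_{j'}`
    (hii : ∀ j j' : Fin J, j' < j → ∀ θ θ' : EuclideanSpace ℝ (Fin d),
      IsProxPtOf (η * lam) (R j) θ θ' → R j' θ' ≤ R j' θ)
    -- condition (iii): projecting onto `Θ` does not increase `R`
    (hiii : ∀ θ θ' : EuclideanSpace ℝ (Fin d), IsProjPt Θ θ θ' →
      (∑ j, R j θ') ≤ ∑ j, R j θ)
    -- one round of the algorithm
    (θt : EuclideanSpace ℝ (Fin d)) (hθt : θt ∈ Θ)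
    (g : EuclideanSpace ℝ (Fin d)) (hg : IsSubgradientAt L g θt)
    (θtil : Fin (J + 1) → EuclideanSpace ℝ (Fin d))
    (h0 : θtil 0 = θt - η • g)
    (hsteps : ∀ j : Fin J, IsProxPtOf (η * lam) (R j) (θtil j.castSucc) (θtil j.succ))
    (θnext : EuclideanSpace ℝ (Fin d)) (hproj : IsProjPt Θ (θtil (Fin.last J)) θnext)
    (θbar : EuclideanSpace ℝ (Fin d)) (hθbar : θbar ∈ Θ)
    -- in addition, `L` is `σ`-strongly convex on `Θ`
    (σ : ℝ)
    (hstrong : ∀ θ₀ ∈ Θ, ∀ g' : EuclideanSpace ℝ (Fin d), IsSubgradientAt L g' θ₀ →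
      ∀ θ : EuclideanSpace ℝ (Fin d),
        L θ₀ + (⟪g', θ - θ₀⟫ : ℝ) + σ / 2 * ‖θ - θ₀‖ ^ 2 ≤ L θ) :
    ((L θt : ℝ) : EReal) + (lam : EReal) * (∑ j, R j θnext)
      ≤ ((L θbar : ℝ) : EReal) + (lam : EReal) * (∑ j, R j θbar)
        + ((η / 2 * G ^ 2 + (‖θbar - θt‖ ^ 2 - ‖θbar - θnext‖ ^ 2) / (2 * η)
            - σ / 2 * ‖θbar - θt‖ ^ 2 : ℝ) : EReal) := by
  classical
  set c : ℝ := η * lam with hcdef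
  have hc : 0 ≤ c := mul_nonneg hη.le hlam
  -- dispose of the case where the right-hand side is ⊤
  by_cases hTop : lam ≠ 0 ∧ ∃ j, R j θbar = ⊤
  · obtain ⟨hlam0, j₀, hj₀⟩ := hTop
    have hlampos : 0 < lam := lt_of_le_of_ne hlam (Ne.symm hlam0)
    have hsum : (∑ j, R j θbar) = ⊤ :=
      OPA7_sum_eq_top _ _ (fun i _ => (hRprop i).2 θbar) (Finset.mem_univ j₀) hj₀
    rw [hsum, EReal.coe_mul_top_of_pos hlampos,
      EReal.add_top_of_ne_bot (EReal.coe_ne_bot _),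
      EReal.top_add_of_ne_bot (EReal.coe_ne_bot _)]
    exact le_top
  -- main case
  push_neg at hTop
  have hfin : ∀ j, (c : EReal) * R j θbar ≠ ⊤ := by
    intro j
    by_cases hl : lam = 0
    · rw [hcdef, hl, mul_zero, EReal.coe_zero, EReal.zero_mul]
      simp
    · have := hTop hl j
      rw [← EReal.coe_toReal this ((hRprop j).2 θbar), ← EReal.coe_mul]
      exact EReal.coe_ne_top _
  -- finite values b j = c * R j θbar
  have hψbar : ∀ j, ∃ b : ℝ, (c : EReal) * R j θbar = (b : EReal) := fun j =>
    ⟨_, (EReal.coe_toReal (hfin j) (OPA7_cmul_ne_bot hc ((hRprop j).2 θbar))).symm⟩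
  choose b hb using hψbar
  -- finite values a j = c * R j (θtil j.succ)
  have hψx : ∀ j, ∃ a : ℝ, (c : EReal) * R j (θtil j.succ) = (a : EReal) := by
    intro j
    have hnb := OPA7_cmul_ne_bot hc ((hRprop j).2 (θtil j.succ))
    have hnt : (c : EReal) * R j (θtil j.succ) ≠ ⊤ := by
      intro htop
      have h1 := hsteps j θbar
      rw [htop, EReal.add_top_of_ne_bot (EReal.coe_ne_bot _), hb j, ← EReal.coe_add] at h1
      exact absurd (top_le_iff.mp h1) (EReal.coe_ne_top _)
    exact ⟨_, (EReal.coe_toReal hnt hnb).symm⟩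
  choose a ha using hψx
  -- per-step inequality
  have S1 : ∀ j : Fin J,
      ‖θtil j.succ - θbar‖^2 + 2*(a j - b j) ≤ ‖θtil j.castSucc - θbar‖^2 := by
    intro j
    apply OPA7_key
    intro t ht0 ht1
    have hconv : (c : EReal) * R j (t • θbar + (1 - t) • (θtil j.succ))
        ≤ ((t * b j + (1 - t) * a j : ℝ) : EReal) := by
      rcases hc.eq_or_lt with h0 | hpos
      · have hz : (c : EReal) = 0 := by rw [← h0]; exact EReal.coe_zero
        have ha0 : a j = 0 := by
          have := ha j; rw [hz, EReal.zero_mul] at this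
          exact_mod_cast this.symm
        have hb0 : b j = 0 := by
          have := hb j; rw [hz, EReal.zero_mul] at this
          exact_mod_cast this.symm
        rw [hz, EReal.zero_mul, ha0, hb0]
        norm_num
      · obtain ⟨ρ, hρ, hcρ⟩ := OPA7_cmul_eq_coe hpos (ha j)
        obtain ⟨β, hβ, hcβ⟩ := OPA7_cmul_eq_coe hpos (hb j)
        have h1 := hRconv j θbar (θtil j.succ) t ht0.le ht1
        rw [hρ, hβ, ← EReal.coe_mul, ← EReal.coe_mul, ← EReal.coe_add] at h1
        calc (c : EReal) * R j (t • θbar + (1 - t) • (θtil j.succ))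
            ≤ (c : EReal) * ((t * β + (1 - t) * ρ : ℝ) : EReal) :=
              mul_le_mul_of_nonneg_left h1 (by exact_mod_cast hc)
          _ = ((c * (t * β + (1 - t) * ρ) : ℝ) : EReal) := (EReal.coe_mul _ _).symm
          _ = ((t * b j + (1 - t) * a j : ℝ) : EReal) := by
              rw [← hcρ, ← hcβ]; norm_cast; ring
    have h2 := hsteps j (t • θbar + (1 - t) • (θtil j.succ))
    rw [ha j] at h2
    have h3 := le_trans h2 (add_le_add_right hconv _)
    rw [← EReal.coe_add, ← EReal.coe_add] at h3
    have h4 := EReal.coe_le_coe_iff.mp h3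
    linarith
  -- telescoping
  set q : Fin (J + 1) → ℝ := fun k => ‖θtil k - θbar‖^2 with hqdef
  open Fin.NatCast in
  have tele : ∑ j : Fin J, (q j.succ - q j.castSucc) = q (Fin.last J) - q 0 := by
    have hcast : ∀ j : Fin J, (((j : ℕ) : Fin (J+1))) = j.castSucc := by
      intro j
      apply Fin.ext
      simp [Fin.val_cast_of_lt (Nat.lt_succ_of_lt j.isLt)]
    have hcast2 : ∀ j : Fin J, ((((j : ℕ) + 1 : ℕ)) : Fin (J+1)) = j.succ := by
      intro j
      apply Fin.ext
      simp [Fin.val_cast_of_lt (Nat.succ_lt_succ j.isLt)]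
    have h1 : ∀ j : Fin J, q j.succ - q j.castSucc
        = (fun i : ℕ => q ((i : Fin (J+1)))) ((j : ℕ) + 1)
          - (fun i : ℕ => q ((i : Fin (J+1)))) (j : ℕ) := by
      intro j; simp only [hcast, hcast2]
    rw [Finset.sum_congr rfl fun j _ => h1 j]
    rw [Fin.sum_univ_eq_sum_range (fun i => q (((i+1 : ℕ) : Fin (J+1))) - q ((i : Fin (J+1)))) J]
    rw [Finset.sum_range_sub (fun i => q ((i : Fin (J+1)))) J]
    have hJ1 : ((J : ℕ) : Fin (J+1)) = Fin.last J := by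
      apply Fin.ext
      simp [Fin.val_cast_of_lt (Nat.lt_succ_self J)]
    rw [hJ1]
    norm_num
  -- summed inequality
  set A : ℝ := ∑ j, a j with hA
  set B : ℝ := ∑ j, b j with hB
  have Ssum : q (Fin.last J) + 2*(A - B) ≤ q 0 := by
    have h1 : ∑ j : Fin J, (q j.succ - q j.castSucc) ≤ ∑ j : Fin J, (-2*(a j - b j)) := by
      apply Finset.sum_le_sum
      intro j _
      have := S1 j
      simp only [hqdef]
      linarith
    rw [tele] at h1
    have h2 : ∑ j : Fin J, (-2*(a j - b j)) = -2*(A - B) := by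
      rw [← Finset.mul_sum, Finset.sum_sub_distrib]
    rw [h2] at h1
    linarith
  -- projection step
  have S2 : ‖θnext - θbar‖^2 ≤ q (Fin.last J) := by
    have := OPA7_key θnext (θtil (Fin.last J)) θbar 0 0 ?_
    · simpa [hqdef] using this
    · intro t ht0 ht1
      have hmem : t • θbar + (1 - t) • θnext ∈ Θ :=
        hΘconv hθbar hproj.1 ht0.le (by linarith) (by ring)
      have := hproj.2 _ hmem
      have hsq := pow_le_pow_left₀ (norm_nonneg _) this 2
      linarith
  -- gradient step
  have hgnorm : ‖g‖ ≤ G := hLlip θt hθt g hg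
  have hstrongineq := hstrong θt hθt g hg θbar
  have S3 : q 0 ≤ ‖θt - θbar‖^2 - 2*η*(L θt - L θbar) - η*σ*‖θbar - θt‖^2 + η^2*G^2 := by
    have hq0 : q 0 = ‖(θt - θbar) - η • g‖^2 := by
      simp only [hqdef, h0]
      congr 2
      abel
    rw [hq0, norm_sub_sq_real, real_inner_smul_right, norm_smul, Real.norm_eq_abs,
      abs_of_pos hη]
    have hneg : (⟪θt - θbar, g⟫ : ℝ) = -(⟪g, θbar - θt⟫ : ℝ) := by
      rw [real_inner_comm, show θbar - θt = -(θt - θbar) by abel, inner_neg_right, neg_neg]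
    rw [hneg]
    have hg2 : ‖g‖^2 ≤ G^2 := pow_le_pow_left₀ (norm_nonneg _) hgnorm 2
    nlinarith [hstrongineq]
  -- combined real inequality
  have Star : ‖θnext - θbar‖^2 + 2*(A - B)
      ≤ ‖θt - θbar‖^2 - 2*η*(L θt - L θbar) - η*σ*‖θbar - θt‖^2 + η^2*G^2 := by
    linarith
  have hrev1 : ‖θt - θbar‖ = ‖θbar - θt‖ := norm_sub_rev _ _
  have hrev2 : ‖θnext - θbar‖ = ‖θbar - θnext‖ := norm_sub_rev _ _
  -- final case split
  by_cases hl : lam = 0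
  · subst hl
    have hc0 : (c : EReal) = 0 := by rw [hcdef]; norm_num
    have hA0 : A = 0 := by
      rw [hA]
      apply Finset.sum_eq_zero
      intro j _
      have := ha j; rw [hc0, EReal.zero_mul] at this
      exact_mod_cast this.symm
    have hB0 : B = 0 := by
      rw [hB]
      apply Finset.sum_eq_zero
      intro j _
      have := hb j; rw [hc0, EReal.zero_mul] at this
      exact_mod_cast this.symm
    rw [EReal.coe_zero, EReal.zero_mul, EReal.zero_mul, add_zero, add_zero,
      ← EReal.coe_add]
    apply EReal.coe_le_coe_iff.mpr
    rw [hA0, hB0] at Star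
    have e1 : ‖θt - θbar‖^2 = ‖θbar - θt‖^2 := by rw [hrev1]
    have e2 : ‖θnext - θbar‖^2 = ‖θbar - θnext‖^2 := by rw [hrev2]
    rw [e1, e2] at Star
    have hfin2 := OPA7_final η 0 G σ (L θt) (L θbar) (‖θbar - θt‖^2) (‖θbar - θnext‖^2)
      0 0 0 hη le_rfl (by linarith [Star])
    linarith [hfin2]
  · have hlampos : 0 < lam := lt_of_le_of_ne hlam (Ne.symm hl)
    have hcpos : 0 < c := mul_pos hη hlampos
    choose ρ hρ hcρ using fun j => OPA7_cmul_eq_coe hcpos (ha j)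
    choose β hβ hcβ using fun j => OPA7_cmul_eq_coe hcpos (hb j)
    -- chain: R j (θtil last) ≤ R j (θtil j.succ)
    have hchain : ∀ j : Fin J, R j (θtil (Fin.last J)) ≤ R j (θtil j.succ) := by
      intro j
      have main : ∀ m : ℕ, (j : ℕ) + 1 ≤ m → ∀ (hm : m ≤ J),
          R j (θtil ⟨m, Nat.lt_succ_of_le hm⟩) ≤ R j (θtil j.succ) := by
        intro m
        induction m with
        | zero => intro hn _; omega
        | succ n ih =>
          intro hn hm
          rcases Nat.lt_or_ge ((j : ℕ) + 1) (n + 1) with hlt | hge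
          · -- n ≥ j+1, use prox step n
            have hnJ : n < J := by omega
            have hjn : (j : ℕ) + 1 ≤ n := by omega
            set k : Fin J := ⟨n, hnJ⟩ with hk
            have hstep := hsteps k
            have hjk : j < k := Fin.lt_def.mpr (show (j : ℕ) < n by omega)
            have := hii k j hjk _ _ hstep
            have hcs : θtil k.castSucc = θtil ⟨n, Nat.lt_succ_of_le (by omega)⟩ := rfl
            have hsc : θtil k.succ = θtil ⟨n + 1, Nat.lt_succ_of_le hm⟩ := rfl
            rw [hcs, hsc] at this
            exact le_trans this (ih hjn (by omega))
          · -- n + 1 = j + 1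
            have : n + 1 = (j : ℕ) + 1 := by omega
            have heq : (⟨n + 1, Nat.lt_succ_of_le hm⟩ : Fin (J + 1)) = j.succ := by
              apply Fin.ext
              simp [this]
            rw [heq]
      have hlast : Fin.last J = ⟨J, Nat.lt_succ_of_le le_rfl⟩ := rfl
      rw [hlast]
      exact main J (by omega) le_rfl
    -- sums of R at θnext
    have hsum1 : (∑ j, R j θnext) ≤ ((∑ j, ρ j : ℝ) : EReal) := by
      calc (∑ j, R j θnext) ≤ ∑ j, R j (θtil (Fin.last J)) := hiii _ _ hproj
        _ ≤ ∑ j, R j (θtil j.succ) := Finset.sum_le_sum fun j _ => hchain j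
        _ = ((∑ j, ρ j : ℝ) : EReal) := by
            rw [OPA7_coe_sum]
            exact Finset.sum_congr rfl fun j _ => hρ j
    have hnexttop : ∀ j, R j θnext ≠ ⊤ := by
      intro j htop
      have : (∑ i, R i θnext) = ⊤ :=
        OPA7_sum_eq_top _ _ (fun i _ => (hRprop i).2 θnext) (Finset.mem_univ j) htop
      rw [this] at hsum1
      exact absurd (top_le_iff.mp hsum1) (EReal.coe_ne_top _)
    have hν : ∀ j, ∃ ν : ℝ, R j θnext = (ν : EReal) := fun j =>
      ⟨_, (EReal.coe_toReal (hnexttop j) ((hRprop j).2 θnext)).symm⟩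
    choose ν hνe using hν
    have hsumν : (∑ j, ν j) ≤ ∑ j, ρ j := by
      apply EReal.coe_le_coe_iff.mp
      rw [OPA7_coe_sum]
      calc (∑ j, ((ν j : ℝ) : EReal)) = ∑ j, R j θnext :=
            Finset.sum_congr rfl fun j _ => (hνe j).symm
        _ ≤ ((∑ j, ρ j : ℝ) : EReal) := hsum1
    -- rewrite goal into reals
    have hgoal1 : (∑ j, R j θnext) = ((∑ j, ν j : ℝ) : EReal) := by
      rw [OPA7_coe_sum]
      exact Finset.sum_congr rfl fun j _ => hνe j
    have hgoal2 : (∑ j, R j θbar) = ((∑ j, β j : ℝ) : EReal) := by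
      rw [OPA7_coe_sum]
      exact Finset.sum_congr rfl fun j _ => hβ j
    rw [hgoal1, hgoal2, ← EReal.coe_mul, ← EReal.coe_mul, ← EReal.coe_add, ← EReal.coe_add,
      ← EReal.coe_add]
    apply EReal.coe_le_coe_iff.mpr
    -- final real arithmetic
    have hAeq : A = c * ∑ j, ρ j := by
      rw [hA, Finset.mul_sum]
      exact Finset.sum_congr rfl fun j _ => (hcρ j).symm
    have hBeq : B = c * ∑ j, β j := by
      rw [hB, Finset.mul_sum]
      exact Finset.sum_congr rfl fun j _ => (hcβ j).symm
    have hmono : c * (∑ j, ν j) ≤ c * ∑ j, ρ j :=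
      mul_le_mul_of_nonneg_left hsumν hc
    rw [hAeq, hBeq] at Star
    rw [hcdef] at Star hmono
    have e1 : ‖θt - θbar‖^2 = ‖θbar - θt‖^2 := by rw [hrev1]
    have e2 : ‖θnext - θbar‖^2 = ‖θbar - θnext‖^2 := by rw [hrev2]
    rw [e1, e2] at Star
    have hfin2 := OPA7_final η lam G σ (L θt) (L θbar) (‖θbar - θt‖^2) (‖θbar - θnext‖^2)
      (∑ j, ν j) (∑ j, β j) (∑ j, ρ j) hη hmono Star
    linarith [hfin2]
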